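/- arXiv:2401.16020 — 2 statements merged into one kernel-verified Lean document; each statement's English description precedes it below -/
import Mathlib

section
/- Let Φ be a parameter taking finitely many values φ with probabilities p(φ), encoded in an ensemble E_Φ of density matrices ρ_φ on ℂ^d, and let M be a projective measurement given by an orthonormal basis {|m⟩} of ℂ^d. Then the ensemble relative entropy of coherence equals the difference between the Holevo information of the ensemble and the mutual information between the parameter and the measurement outcome: C_M(E_Φ) = χ(E_Φ) − I(Φ;M). -/
open Matrix
open scoped ComplexOrder

/-- Von Neumann entropy `S(ρ) = -tr(ρ log ρ)`, computed as `∑ negMulLog λᵢ`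
over the eigenvalues of a Hermitian matrix (junk value `0` otherwise). -/
noncomputable def vNEntropy {n : Type*} [Fintype n] [DecidableEq n]
    (ρ : Matrix n n ℂ) : ℝ :=
  if h : ρ.IsHermitian then ∑ i, Real.negMulLog (h.eigenvalues i) else 0

/-- Shannon entropy of a finitely supported distribution. -/
noncomputable def shannonEntropy {ι : Type*} [Fintype ι] (p : ι → ℝ) : ℝ :=
  ∑ i, Real.negMulLog (p i)

/-- The state `ρ` decohered in the orthonormal basis `v`:
`Δ_M[ρ] = ∑ m ⟨m|ρ|m⟩ |m⟩⟨m|`. -/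
noncomputable def decohere {d : ℕ} (v : Fin d → Fin d → ℂ)
    (ρ : Matrix (Fin d) (Fin d) ℂ) : Matrix (Fin d) (Fin d) ℂ :=
  ∑ m, (star (v m) ⬝ᵥ ρ *ᵥ v m) • vecMulVec (v m) (star (v m))

/-- Relative entropy of coherence `C_M(ρ) = S(Δ_M[ρ]) - S(ρ)`. -/
noncomputable def relEntCoherence {d : ℕ} (v : Fin d → Fin d → ℂ)
    (ρ : Matrix (Fin d) (Fin d) ℂ) : ℝ :=
  vNEntropy (decohere v ρ) - vNEntropy ρ

section CXIAux
open Polynomial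
variable {n : Type*} [Fintype n] [DecidableEq n]


lemma charpoly_conj_aux (W A : Matrix n n ℂ) (hW : W * star W = 1) :
    (W * A * star W).charpoly = A.charpoly := by
  have hW' : star W * W = 1 := mul_eq_one_comm.mp hW
  set f := ((Polynomial.C : ℂ →+* ℂ[X]).mapMatrix : Matrix n n ℂ →+* Matrix n n ℂ[X]) with hf
  have hsc : Matrix.scalar n (X : ℂ[X]) = (X : ℂ[X]) • (1 : Matrix n n ℂ[X]) := by
    ext i j
    by_cases h : i = j <;> simp [Matrix.scalar_apply, Matrix.one_apply, h, Matrix.diagonal_apply]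
  have key : charmatrix (W * A * star W) = f W * charmatrix A * f (star W) := by
    unfold charmatrix
    rw [hsc]
    have h1 : f W * ((X : ℂ[X]) • (1 : Matrix n n ℂ[X]) - f A) * f (star W)
        = (X : ℂ[X]) • (f W * 1 * f (star W)) - f W * f A * f (star W) := by
      rw [mul_sub, sub_mul, mul_smul_comm, smul_mul_assoc]
    rw [h1, mul_one, ← _root_.map_mul f, hW, _root_.map_one f, ← _root_.map_mul f W A, ← _root_.map_mul f]
  unfold Matrix.charpoly
  rw [key, det_mul, det_mul, mul_comm, ← mul_assoc, ← det_mul, ← _root_.map_mul f, hW', _root_.map_one f, det_one,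
    one_mul]

lemma charpoly_diagonal_aux (b : n → ℂ) :
    (Matrix.diagonal b).charpoly = ∏ i, (X - C (b i)) := by
  have : charmatrix (Matrix.diagonal b) = Matrix.diagonal fun i => X - C (b i) := by
    ext i j
    by_cases h : i = j
    · subst h; simp
    · simp [h, Matrix.diagonal_apply_ne _ h]
  rw [Matrix.charpoly, this, det_diagonal]

lemma multiset_eq_of_prod_eq (a b : n → ℂ)
    (h : ∏ i, (X - C (a i)) = ∏ i, (X - C (b i))) :
    Finset.univ.val.map a = Finset.univ.val.map b := by
  have ha : (∏ i, (X - C (a i))).roots = Finset.univ.val.map a := by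
    rw [Finset.prod_eq_multiset_prod]
    rw [show (Multiset.map (fun i => X - C (a i)) Finset.univ.val)
        = Multiset.map (fun r => X - C r) (Finset.univ.val.map a) by
          rw [Multiset.map_map]; rfl,
      Polynomial.roots_multiset_prod_X_sub_C]
  have hb : (∏ i, (X - C (b i))).roots = Finset.univ.val.map b := by
    rw [Finset.prod_eq_multiset_prod]
    rw [show (Multiset.map (fun i => X - C (b i)) Finset.univ.val)
        = Multiset.map (fun r => X - C r) (Finset.univ.val.map b) by
          rw [Multiset.map_map]; rfl,
      Polynomial.roots_multiset_prod_X_sub_C]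
  rw [← ha, ← hb, h]

set_option linter.unusedSectionVars false

lemma sum_negMulLog_eig {A : Matrix n n ℂ} (hA : A.IsHermitian)
    (W : Matrix n n ℂ) (hW : W * star W = 1) (c : n → ℝ)
    (hAW : A = W * Matrix.diagonal (fun m => (c m : ℂ)) * star W) :
    ∑ i, Real.negMulLog (hA.eigenvalues i) = ∑ m, Real.negMulLog (c m) := by
  have hU : (hA.eigenvectorUnitary : Matrix n n ℂ) * star (hA.eigenvectorUnitary : Matrix n n ℂ)
      = 1 := Matrix.mem_unitaryGroup_iff.mp hA.eigenvectorUnitary.2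
  have h1 : A.charpoly = ∏ m, (X - C ((c m : ℂ))) := by
    rw [hAW, charpoly_conj_aux _ _ hW, charpoly_diagonal_aux]
  have h2 : A.charpoly = ∏ i, (X - C ((hA.eigenvalues i : ℂ))) := by
    conv_lhs => rw [hA.spectral_theorem]
    rw [Unitary.conjStarAlgAut_apply, charpoly_conj_aux _ _ hU, charpoly_diagonal_aux]
    rfl
  have hms := multiset_eq_of_prod_eq _ _ (h2.symm.trans h1)
  have key := congrArg (fun s : Multiset ℂ => (s.map (fun z => Real.negMulLog z.re)).sum) hms
  have e1 : ∀ (a : n → ℝ), ((Finset.univ.val.map (fun i => ((a i : ℂ)))).map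
      (fun z => Real.negMulLog z.re)).sum = ∑ i, Real.negMulLog (a i) := by
    intro a
    rw [Multiset.map_map]
    simp only [Function.comp, Complex.ofReal_re]
    rfl
  rw [show Finset.univ.val.map (fun i => ((hA.eigenvalues i : ℂ)))
      = Finset.univ.val.map (fun m => ((c m : ℂ))) from hms] at key
  calc ∑ i, Real.negMulLog (hA.eigenvalues i)
      = ((Finset.univ.val.map (fun i => ((hA.eigenvalues i : ℂ)))).map
          (fun z => Real.negMulLog z.re)).sum := (e1 _).symm
    _ = ((Finset.univ.val.map (fun m => ((c m : ℂ)))).map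
          (fun z => Real.negMulLog z.re)).sum := by rw [hms]
    _ = ∑ m, Real.negMulLog (c m) := e1 _

lemma vNEntropy_decohere {d : ℕ} (v : Fin d → Fin d → ℂ)
    (hv : ∀ i j, star (v i) ⬝ᵥ v j = if i = j then (1 : ℂ) else 0)
    (σ : Matrix (Fin d) (Fin d) ℂ) (hσ : σ.IsHermitian) :
    vNEntropy (decohere v σ) = ∑ m, Real.negMulLog ((star (v m) ⬝ᵥ σ *ᵥ v m).re) := by
  set W : Matrix (Fin d) (Fin d) ℂ := Matrix.of fun i m => v m i with hWdef
  have hWsW : star W * W = 1 := by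
    ext m m'
    have := hv m m'
    simp only [dotProduct, Pi.star_apply, RCLike.star_def] at this
    simp [Matrix.mul_apply, Matrix.conjTranspose_apply, Matrix.one_apply, hWdef, this]
  have hW : W * star W = 1 := mul_eq_one_comm.mp hWsW
  set cR : Fin d → ℝ := fun m => (star (v m) ⬝ᵥ σ *ᵥ v m).re with hcR
  have creal : ∀ m, ((cR m : ℂ)) = star (v m) ⬝ᵥ σ *ᵥ v m := by
    intro m
    have hstar : star (star (v m) ⬝ᵥ σ *ᵥ v m) = star (v m) ⬝ᵥ σ *ᵥ v m := by
      conv_lhs => rw [star_dotProduct, star_star, star_mulVec]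
      rw [← dotProduct_mulVec, hσ.eq]
    exact Complex.conj_eq_iff_re.mp hstar
  have hdec : decohere v σ = W * Matrix.diagonal (fun m => ((cR m : ℂ))) * star W := by
    ext i j
    simp only [decohere, Matrix.sum_apply, Matrix.smul_apply, vecMulVec_apply, smul_eq_mul,
      Matrix.mul_apply, Matrix.diagonal_apply, Matrix.conjTranspose_apply, hWdef, Matrix.of_apply,
      Pi.star_apply, Matrix.star_apply, RCLike.star_def, creal, mul_ite, ite_mul, mul_zero, zero_mul,
      Finset.sum_ite_eq, Finset.sum_ite_eq', Finset.mem_univ, if_true]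
    exact Finset.sum_congr rfl fun m _ => by ring
  have hherm : (decohere v σ).IsHermitian := by
    rw [hdec]
    have hD : (Matrix.diagonal (fun m => ((cR m : ℂ))))ᴴ
        = Matrix.diagonal (fun m => ((cR m : ℂ))) := by
      ext a b
      by_cases h : a = b <;>
        simp [h, eq_comm, Matrix.diagonal_apply, Matrix.conjTranspose_apply, Complex.conj_ofReal]
    show _ᴴ = _
    rw [Matrix.star_eq_conjTranspose, conjTranspose_mul, conjTranspose_mul,
      conjTranspose_conjTranspose, hD, Matrix.mul_assoc]
  unfold vNEntropy
  rw [dif_pos hherm]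
  exact sum_negMulLog_eig hherm W hW cR hdec




end CXIAux

/-- **CXI equality for projective measurements.**
For a parameter `Φ` taking finitely many values `φ` with probabilities `p φ`,
encoded in density matrices `ρ φ` on `ℂ^d`, and a projective measurement given
by an orthonormal basis `v` of `ℂ^d`, the ensemble relative entropy of
coherence `C_M(E_Φ) = ∑ φ p(φ) C_M(ρ_φ) − C_M(ρ_Φ)` equals the Holevo
information `χ(E_Φ) = S(ρ_Φ) − ∑ φ p(φ) S(ρ_φ)` minus the mutual information
`I(Φ;M) = H(M) − H(M|Φ)`. -/
theorem cxi_equality_projective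
    {d : ℕ} {ι : Type*} [Fintype ι]
    (p : ι → ℝ) (hp0 : ∀ φ, 0 ≤ p φ) (hp1 : ∑ φ, p φ = 1)
    (ρ : ι → Matrix (Fin d) (Fin d) ℂ)
    (hρpsd : ∀ φ, (ρ φ).PosSemidef) (hρtr : ∀ φ, (ρ φ).trace = 1)
    (v : Fin d → Fin d → ℂ)
    (hv : ∀ i j, star (v i) ⬝ᵥ v j = if i = j then (1 : ℂ) else 0) :
    (∑ φ, p φ * relEntCoherence v (ρ φ))
        - relEntCoherence v (∑ φ, p φ • ρ φ)
      = (vNEntropy (∑ φ, p φ • ρ φ) - ∑ φ, p φ * vNEntropy (ρ φ))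
        - (shannonEntropy (fun m => ∑ φ, p φ * (star (v m) ⬝ᵥ (ρ φ) *ᵥ v m).re)
            - ∑ φ, p φ * shannonEntropy (fun m => (star (v m) ⬝ᵥ (ρ φ) *ᵥ v m).re)) := by
  set ρbar : Matrix (Fin d) (Fin d) ℂ := ∑ φ, p φ • ρ φ with hρbar
  have hbarH : ρbar.IsHermitian := by
    show ρbarᴴ = ρbar
    rw [hρbar, Matrix.conjTranspose_sum]
    refine Finset.sum_congr rfl fun φ _ => ?_
    rw [Matrix.conjTranspose_smul, star_trivial, (hρpsd φ).1.eq]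
  have hH : ∀ φ, vNEntropy (decohere v (ρ φ))
      = shannonEntropy (fun m => (star (v m) ⬝ᵥ (ρ φ) *ᵥ v m).re) :=
    fun φ => vNEntropy_decohere v hv (ρ φ) (hρpsd φ).1
  have hHbar : vNEntropy (decohere v ρbar)
      = shannonEntropy (fun m => (star (v m) ⬝ᵥ ρbar *ᵥ v m).re) :=
    vNEntropy_decohere v hv ρbar hbarH
  have hqre : ∀ m, (star (v m) ⬝ᵥ ρbar *ᵥ v m).re
      = ∑ φ, p φ * (star (v m) ⬝ᵥ (ρ φ) *ᵥ v m).re := by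
    intro m
    have h1 : star (v m) ⬝ᵥ ρbar *ᵥ v m
        = ∑ φ, (p φ : ℂ) * (star (v m) ⬝ᵥ (ρ φ) *ᵥ v m) := by
      have h0 : ρbar *ᵥ v m = ∑ φ, (p φ : ℂ) • ((ρ φ) *ᵥ v m) := by
        funext i
        simp only [hρbar, Matrix.mulVec, dotProduct, Matrix.sum_apply, Matrix.smul_apply,
          Finset.sum_apply, Pi.smul_apply, smul_eq_mul, Complex.real_smul, Finset.sum_mul,
          Finset.mul_sum]
        rw [Finset.sum_comm]
        exact Finset.sum_congr rfl fun φ _ => Finset.sum_congr rfl fun j _ => by ring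
      rw [h0]
      simp only [dotProduct, Finset.sum_apply, Pi.smul_apply, smul_eq_mul, Finset.mul_sum]
      rw [Finset.sum_comm]
      exact Finset.sum_congr rfl fun φ _ => Finset.sum_congr rfl fun i _ => by ring
    rw [h1, Complex.re_sum]
    exact Finset.sum_congr rfl fun φ _ => by simp [Complex.mul_re]
  have hSbar : shannonEntropy (fun m => ∑ φ, p φ * (star (v m) ⬝ᵥ (ρ φ) *ᵥ v m).re)
      = shannonEntropy (fun m => (star (v m) ⬝ᵥ ρbar *ᵥ v m).re) := by
    congr 1
    funext m
    exact (hqre m).symm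
  rw [hSbar]
  unfold relEntCoherence
  rw [hHbar]
  have expand : ∑ φ, p φ * (vNEntropy (decohere v (ρ φ)) - vNEntropy (ρ φ))
      = (∑ φ, p φ * shannonEntropy (fun m => (star (v m) ⬝ᵥ (ρ φ) *ᵥ v m).re))
        - ∑ φ, p φ * vNEntropy (ρ φ) := by
    rw [← Finset.sum_sub_distrib]
    exact Finset.sum_congr rfl fun φ _ => by rw [hH φ]; ring
  rw [expand]
  ring
end

section
/- Let M = {Π_j}_{j=1}^N be a projective measurement on ℂ^d, i.e. the Π_j are pairwise orthogonal self-adjoint projections with Σ_j Π_j = I, regarded as a POVM. Then for every density matrix ρ on ℂ^d the POVM coherence defined via the Naimark dilation coincides with the relative entropy of coherence: S(Σ_j M̃_j ρ̃ M̃_j) − S(ρ̃) = S(Σ_j Π_j ρ Π_j) − S(ρ). -/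
open Matrix
open scoped ComplexOrder Kronecker

/-- The Naimark dilation `V = ∑ⱼ Mⱼ ⊗ |j⟩` of a POVM `{Mⱼ}`, as a matrix from
`ℂ^d` to `ℂ^d ⊗ ℂ^N`: it sends `|ψ⟩` to `∑ⱼ (Mⱼ|ψ⟩) ⊗ |j⟩`. -/
def naimark {d N : ℕ} (M : Fin N → Matrix (Fin d) (Fin d) ℂ) :
    Matrix (Fin d × Fin N) (Fin d) ℂ :=
  fun q k => M q.2 q.1 k

/-- The dilated projector `M̃ⱼ = I ⊗ |j⟩⟨j|` on `ℂ^d ⊗ ℂ^N`. -/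
def dilProj (d : ℕ) {N : ℕ} (j : Fin N) :
    Matrix (Fin d × Fin N) (Fin d × Fin N) ℂ :=
  (1 : Matrix (Fin d) (Fin d) ℂ) ⊗ₖ single j j 1

/-- The dilated state `ρ̃ = V ρ V†`. -/
noncomputable def dilate {d N : ℕ} (M : Fin N → Matrix (Fin d) (Fin d) ℂ)
    (ρ : Matrix (Fin d) (Fin d) ℂ) : Matrix (Fin d × Fin N) (Fin d × Fin N) ℂ :=
  naimark M * ρ * (naimark M)ᴴ

/-- The POVM coherence `C_M(ρ) = S(∑ⱼ M̃ⱼ ρ̃ M̃ⱼ) − S(ρ̃)` of `ρ` relative to the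
POVM `{Mⱼ}`, defined through the Naimark dilation. -/
noncomputable def povmCoherence {d N : ℕ} (M : Fin N → Matrix (Fin d) (Fin d) ℂ)
    (ρ : Matrix (Fin d) (Fin d) ℂ) : ℝ :=
  vNEntropy (∑ j, dilProj d j * dilate M ρ * dilProj d j) - vNEntropy (dilate M ρ)

open Polynomial in
lemma eval_charpoly' {n : Type*} [Fintype n] [DecidableEq n] (M : Matrix n n ℂ) (x : ℂ) :
    M.charpoly.eval x = (x • (1 : Matrix n n ℂ) - M).det := by
  rw [Matrix.charpoly, ← Polynomial.coe_evalRingHom, RingHom.map_det]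
  congr 1
  ext i j
  by_cases h : i = j <;>
    simp [charmatrix_apply, Matrix.diagonal_apply, h, Matrix.one_apply, Matrix.sub_apply]

open Polynomial in
lemma charpoly_diagonal' {n : Type*} [Fintype n] [DecidableEq n] (v : n → ℂ) :
    (Matrix.diagonal v).charpoly = ∏ i, (X - C (v i)) := by
  have : charmatrix (diagonal v) = diagonal (fun i => X - C (v i)) := by
    ext i j
    by_cases h : i = j <;> simp [charmatrix_apply, diagonal_apply, h]
  rw [Matrix.charpoly, this, det_diagonal]

lemma charpoly_unitary_conj {n : Type*} [Fintype n] [DecidableEq n]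
    (U D : Matrix n n ℂ) (hU : U * Uᴴ = 1) (hU' : Uᴴ * U = 1) :
    (U * D * Uᴴ).charpoly = D.charpoly := by
  apply Polynomial.funext
  intro x
  rw [eval_charpoly', eval_charpoly']
  have h1 : x • (1 : Matrix n n ℂ) - U * D * Uᴴ = U * (x • 1 - D) * Uᴴ := by
    rw [Matrix.mul_sub, Matrix.sub_mul, mul_smul_comm, Matrix.mul_one, smul_mul_assoc, hU]
  rw [h1, det_mul, det_mul, mul_comm, ← mul_assoc, ← det_mul, hU', det_one, one_mul]

open Polynomial in
lemma roots_charpoly_hermitian {n : Type*} [Fintype n] [DecidableEq n]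
    {A : Matrix n n ℂ} (hA : A.IsHermitian) :
    A.charpoly.roots = Finset.univ.val.map (fun i => (hA.eigenvalues i : ℂ)) := by
  conv_lhs => rw [hA.spectral_theorem, Unitary.conjStarAlgAut_apply]
  rw [show (star (hA.eigenvectorUnitary : Matrix n n ℂ)) = (hA.eigenvectorUnitary : Matrix n n ℂ)ᴴ from rfl,
    charpoly_unitary_conj _ _ (Matrix.mem_unitaryGroup_iff.mp hA.eigenvectorUnitary.2)
      (Matrix.mem_unitaryGroup_iff'.mp hA.eigenvectorUnitary.2),
    charpoly_diagonal']
  rw [Finset.prod_eq_multiset_prod]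
  have : Multiset.map (fun i => X - C ((RCLike.ofReal ∘ hA.eigenvalues) i)) Finset.univ.val
      = Multiset.map (fun a => X - C a)
        (Multiset.map (fun i => (hA.eigenvalues i : ℂ)) Finset.univ.val) := by
    rw [Multiset.map_map]; rfl
  rw [this]
  exact roots_multiset_prod_X_sub_C _

open Polynomial in
lemma charpoly_conj_isometry {m n : Type*} [Fintype m] [DecidableEq m] [Fintype n] [DecidableEq n]
    (V : Matrix m n ℂ) (hV : Vᴴ * V = 1) (hc : Fintype.card n ≤ Fintype.card m)
    (A : Matrix n n ℂ) :
    (V * A * Vᴴ).charpoly = X ^ (Fintype.card m - Fintype.card n) * A.charpoly := by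
  have key : ∀ x : ℂ, x ≠ 0 →
      ((V * A * Vᴴ).charpoly - X ^ (Fintype.card m - Fintype.card n) * A.charpoly).IsRoot x := by
    intro x hx
    have hsplit1 : x • (1 : Matrix m m ℂ) - V * A * Vᴴ = x • (1 + (-x⁻¹) • (V * A * Vᴴ)) := by
      rw [smul_add, smul_smul, mul_neg, mul_inv_cancel₀ hx, neg_one_smul, ← sub_eq_add_neg]
    have hsplit2 : x • (1 : Matrix n n ℂ) - A = x • (1 + (-x⁻¹) • A) := by
      rw [smul_add, smul_smul, mul_neg, mul_inv_cancel₀ hx, neg_one_smul, ← sub_eq_add_neg]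
    simp only [IsRoot, eval_sub, eval_mul, eval_pow, eval_X, eval_charpoly']
    rw [hsplit1, hsplit2, det_smul, det_smul]
    have h1 : (1 : Matrix m m ℂ) + (-x⁻¹) • (V * A * Vᴴ) = 1 + (V * ((-x⁻¹) • A)) * Vᴴ := by
      rw [Matrix.mul_smul, Matrix.smul_mul]
    have h2 : det ((1 : Matrix m m ℂ) + (V * ((-x⁻¹) • A)) * Vᴴ)
        = det ((1 : Matrix n n ℂ) + (-x⁻¹) • A) := by
      rw [det_one_add_mul_comm, ← Matrix.mul_assoc, hV, Matrix.one_mul]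
    rw [h1, h2, ← mul_assoc, ← pow_add, Nat.sub_add_cancel hc]
    ring
  have hinf : {x : ℂ | ((V * A * Vᴴ).charpoly
      - X ^ (Fintype.card m - Fintype.card n) * A.charpoly).IsRoot x}.Infinite := by
    apply Set.Infinite.mono (s := {(0 : ℂ)}ᶜ)
    · intro x hx; exact key x hx
    · exact Set.Finite.infinite_compl (Set.finite_singleton 0)
  have h0 := Polynomial.eq_zero_of_infinite_isRoot _ hinf
  linear_combination h0

lemma vNEntropy_eq_sum_roots {n : Type*} [Fintype n] [DecidableEq n]
    {A : Matrix n n ℂ} (hA : A.IsHermitian) :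
    vNEntropy A = ((A.charpoly.roots).map (fun z => Real.negMulLog z.re)).sum := by
  rw [vNEntropy, dif_pos hA, roots_charpoly_hermitian hA, Multiset.map_map]
  rw [Finset.sum_eq_multiset_sum]
  simp [Function.comp]

open Polynomial in
lemma vNEntropy_conj_isometry {m n : Type*} [Fintype m] [DecidableEq m] [Fintype n] [DecidableEq n]
    (V : Matrix m n ℂ) (hV : Vᴴ * V = 1) (hc : Fintype.card n ≤ Fintype.card m)
    {A : Matrix n n ℂ} (hA : A.IsHermitian) :
    vNEntropy (V * A * Vᴴ) = vNEntropy A := by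
  have hB : (V * A * Vᴴ).IsHermitian := by
    unfold Matrix.IsHermitian at hA ⊢
    rw [conjTranspose_mul, conjTranspose_mul, conjTranspose_conjTranspose, hA, Matrix.mul_assoc]
  rw [vNEntropy_eq_sum_roots hB, vNEntropy_eq_sum_roots hA, charpoly_conj_isometry V hV hc,
    Polynomial.roots_mul (mul_ne_zero (pow_ne_zero _ X_ne_zero) (charpoly_monic A).ne_zero),
    roots_pow, roots_X, Multiset.map_add, Multiset.sum_add]
  have : ((Fintype.card m - Fintype.card n) • ({0} : Multiset ℂ))
      = Multiset.replicate (Fintype.card m - Fintype.card n) 0 :=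
    Multiset.nsmul_singleton _ _
  rw [this, Multiset.map_replicate]
  simp [Real.negMulLog_zero]
lemma naimark_adj_mul {d N : ℕ} (P : Fin N → Matrix (Fin d) (Fin d) ℂ)
    (h : ∑ j, (P j)ᴴ * P j = 1) : (naimark P)ᴴ * naimark P = 1 := by
  rw [← h]
  ext k l
  rw [Matrix.mul_apply, Fintype.sum_prod_type, Finset.sum_comm]
  simp [naimark, conjTranspose_apply, Matrix.sum_apply, Matrix.mul_apply]

lemma dilate_apply {d N : ℕ} (M : Fin N → Matrix (Fin d) (Fin d) ℂ)
    (ρ : Matrix (Fin d) (Fin d) ℂ) (a b : Fin d) (j k : Fin N) :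
    dilate M ρ (a, j) (b, k) = (M j * ρ * (M k)ᴴ) a b := by
  simp [dilate, naimark, Matrix.mul_apply, conjTranspose_apply]

lemma dilProj_apply {d N : ℕ} (j : Fin N) (a b : Fin d) (m n : Fin N) :
    dilProj d j (a, m) (b, n) = if j = m ∧ j = n ∧ a = b then 1 else 0 := by
  simp only [dilProj, kroneckerMap_apply, Matrix.one_apply, Matrix.single_apply, Matrix.of_apply]
  by_cases h1 : j = m <;> by_cases h2 : j = n <;> by_cases h3 : a = b <;>
    simp [h1, h2, h3]

lemma mul_dilProj_apply {d N : ℕ} (j : Fin N) (X : Matrix (Fin d × Fin N) (Fin d × Fin N) ℂ)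
    (u : Fin d × Fin N) (b : Fin d) (n : Fin N) :
    (X * dilProj d j) u (b, n) = if j = n then X u (b, j) else 0 := by
  rw [Matrix.mul_apply, Fintype.sum_prod_type]
  simp only [dilProj_apply, mul_ite, mul_one, mul_zero, ite_and]
  by_cases h : j = n <;>
    simp [h, Finset.sum_ite_eq, Finset.sum_ite_eq']

lemma dilProj_mul_apply {d N : ℕ} (j : Fin N) (X : Matrix (Fin d × Fin N) (Fin d × Fin N) ℂ)
    (a : Fin d) (m : Fin N) (u : Fin d × Fin N) :
    (dilProj d j * X) (a, m) u = if j = m then X (a, j) u else 0 := by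
  rw [Matrix.mul_apply, Fintype.sum_prod_type]
  simp only [dilProj_apply, ite_mul, one_mul, zero_mul, ite_and]
  by_cases h : j = m <;>
    simp [h, Finset.sum_ite_eq, Finset.sum_ite_eq']

lemma sum_dilProj_dilate {d N : ℕ} (P : Fin N → Matrix (Fin d) (Fin d) ℂ)
    (hPorth : ∀ j k, P j * P k = if j = k then P j else 0)
    (hPsa : ∀ j, (P j)ᴴ = P j)
    (ρ : Matrix (Fin d) (Fin d) ℂ) :
    ∑ j, dilProj d j * dilate P ρ * dilProj d j = dilate P (∑ j, P j * ρ * P j) := by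
  have hblock : ∀ m n : Fin N, P m * (∑ l, P l * ρ * P l) * (P n)ᴴ
      = if m = n then P m * ρ * (P m)ᴴ else 0 := by
    intro m n
    rw [hPsa n, hPsa m, Matrix.mul_sum, Matrix.sum_mul]
    have hterm : ∀ l : Fin N, P m * (P l * ρ * P l) * P n
        = if l = m ∧ l = n then P l * ρ * P l else 0 := by
      intro l
      have h0 : P m * (P l * ρ * P l) * P n = (P m * P l) * ρ * (P l * P n) := by
        simp only [Matrix.mul_assoc]
      rw [h0, hPorth m l, hPorth l n]
      by_cases h1 : l = m
      · subst h1
        by_cases h2 : l = n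
        · subst h2; simp
        · rw [if_pos rfl, if_neg h2, Matrix.mul_zero, if_neg (by simp [h2])]
      · rw [if_neg (fun h => h1 h.symm), Matrix.zero_mul, Matrix.zero_mul,
          if_neg (fun h => h1 h.1)]
    rw [Finset.sum_congr rfl (fun l _ => hterm l)]
    rcases eq_or_ne m n with h | h
    · subst h
      simp only [and_self, if_pos rfl]
      rw [Finset.sum_ite_eq' Finset.univ m (fun l => P l * ρ * P l)]
      simp
    · rw [if_neg h]
      apply Finset.sum_eq_zero
      intro l _
      rw [if_neg]
      rintro ⟨h1, h2⟩
      exact h (h1.symm.trans h2)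
  ext ⟨a, m⟩ ⟨b, n⟩
  rw [Matrix.sum_apply, dilate_apply, hblock m n]
  have hterm2 : ∀ j : Fin N, (dilProj d j * dilate P ρ * dilProj d j) (a, m) (b, n)
      = if j = m ∧ j = n then (P j * ρ * (P j)ᴴ) a b else 0 := by
    intro j
    rw [mul_dilProj_apply, dilProj_mul_apply, dilate_apply]
    by_cases h1 : j = m <;> by_cases h2 : j = n <;> simp [h1, h2]
  rw [Finset.sum_congr rfl (fun j _ => hterm2 j)]
  rcases eq_or_ne m n with h | h
  · subst h
    simp only [and_self]
    simp [Finset.sum_ite_eq, Finset.sum_ite_eq']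
  · rw [if_neg h, Matrix.zero_apply]
    apply Finset.sum_eq_zero
    intro j _
    rw [if_neg]
    rintro ⟨h1, h2⟩
    exact h (h1.symm.trans h2)

/-- For a projective measurement `{Πⱼ}` (pairwise orthogonal self-adjoint
projections summing to the identity), regarded as a POVM, the POVM coherence
defined via the Naimark dilation coincides with the relative entropy of
coherence: `S(∑ⱼ M̃ⱼ ρ̃ M̃ⱼ) − S(ρ̃) = S(∑ⱼ Πⱼ ρ Πⱼ) − S(ρ)`. -/
theorem povmCoherence_of_projective
    {d N : ℕ} (P : Fin N → Matrix (Fin d) (Fin d) ℂ)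
    (hPorth : ∀ j k, P j * P k = if j = k then P j else 0)
    (hPsa : ∀ j, (P j)ᴴ = P j)
    (hPsum : ∑ j, P j = 1)
    (ρ : Matrix (Fin d) (Fin d) ℂ)
    (hρpsd : ρ.PosSemidef) (hρtr : ρ.trace = 1) :
    vNEntropy (∑ j, dilProj d j * dilate P ρ * dilProj d j)
        - vNEntropy (dilate P ρ)
      = vNEntropy (∑ j, P j * ρ * P j) - vNEntropy ρ := by
  rcases Nat.eq_zero_or_pos N with hN | hN
  · subst hN
    have hd : d = 0 := by
      by_contra hd
      have h0 := congrFun (congrFun hPsum ⟨0, Nat.pos_of_ne_zero hd⟩)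
        (⟨0, Nat.pos_of_ne_zero hd⟩ : Fin d)
      simp [Matrix.sum_apply, Matrix.one_apply] at h0
    subst hd
    simp only [vNEntropy]
    split_ifs <;> simp
  · have hd' : Fintype.card (Fin d) ≤ Fintype.card (Fin d × Fin N) := by
      simp only [Fintype.card_prod, Fintype.card_fin]
      exact Nat.le_mul_of_pos_right d hN
    have hsum1 : ∑ j, (P j)ᴴ * P j = 1 := by
      rw [← hPsum]
      exact Finset.sum_congr rfl fun j _ => by rw [hPsa j, hPorth j j, if_pos rfl]
    have hV := naimark_adj_mul P hsum1
    have hρh : ρ.IsHermitian := hρpsd.isHermitian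
    have hsh : (∑ j, P j * ρ * P j).IsHermitian := by
      show _ = _
      rw [Matrix.conjTranspose_sum]
      refine Finset.sum_congr rfl fun j _ => ?_
      rw [Matrix.conjTranspose_mul, Matrix.conjTranspose_mul, hPsa j, hρh.eq,
        ← Matrix.mul_assoc]
    rw [sum_dilProj_dilate P hPorth hPsa ρ]
    show vNEntropy (naimark P * (∑ j, P j * ρ * P j) * (naimark P)ᴴ)
        - vNEntropy (naimark P * ρ * (naimark P)ᴴ) = _
    rw [vNEntropy_conj_isometry _ hV hd' hsh, vNEntropy_conj_isometry _ hV hd' hρh]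
end
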